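/- For a Schwartz function f on ℝ, a positive integer k, and complex s with Re(s) > 1, (1/Γ(s)) ∫_0^∞ x^{s-1} f(x+t) dx = ((-1)^k/Γ(s+k)) ∫_0^∞ x^{s+k-1} f^{(k)}(x+t) dx for every real t. -/

import Mathlib

open MeasureTheory Set Filter Asymptotics Real Complex Topology

-- shifted Schwartz decay
lemma schwartz_shift_isBigO (g : SchwartzMap ℝ ℂ) (t : ℝ) (a : ℝ) (ha : 0 ≤ a) :
    (fun x : ℝ => g (x + t)) =O[atTop] fun x : ℝ => x ^ (-a) := by
  have h1 : (⇑g) =O[cocompact ℝ] fun x => ‖x‖ ^ (-a) := g.isBigO_cocompact_rpow (-a)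
  have htend : Tendsto (fun x : ℝ => x + t) atTop (cocompact ℝ) := by
    refine (tendsto_atTop_add_const_right atTop t tendsto_id).mono_right ?_
    rw [cocompact_eq_atBot_atTop]
    exact le_sup_right
  have h2 : (fun x : ℝ => g (x + t)) =O[atTop] fun x => ‖x + t‖ ^ (-a) :=
    h1.comp_tendsto htend
  refine h2.trans (IsBigO.of_bound ((2:ℝ) ^ a) ?_)
  filter_upwards [eventually_ge_atTop (2 * |t| + 1)] with x hx
  have hxpos : 0 < x := lt_of_lt_of_le (by positivity) hx
  have hxt : x / 2 ≤ x + t := by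
    have := abs_le.mp (le_refl |t|)
    have h' : -|t| ≤ t := neg_abs_le t
    nlinarith [abs_nonneg t]
  have hx2 : (0:ℝ) < x / 2 := by linarith
  have hxt0 : (0:ℝ) < x + t := lt_of_lt_of_le hx2 hxt
  simp only [Real.norm_eq_abs]
  rw [ _root_.abs_of_pos hxt0,
    show |(x + t) ^ (-a)| = (x + t) ^ (-a) from
      _root_.abs_of_nonneg (Real.rpow_nonneg hxt0.le _),
    show |x ^ (-a)| = x ^ (-a) from _root_.abs_of_nonneg (Real.rpow_nonneg hxpos.le _)]
  calc (x + t) ^ (-a) ≤ (x / 2) ^ (-a) :=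
        Real.rpow_le_rpow_of_nonpos hx2 hxt (neg_nonpos.mpr ha)
    _ = (2:ℝ) ^ a * x ^ (-a) := by
        rw [div_eq_mul_inv, mul_comm, Real.mul_rpow (by norm_num) hxpos.le,
          ← Real.rpow_neg_one 2, ← Real.rpow_mul (by norm_num : (0:ℝ) ≤ 2),
          neg_mul_neg, one_mul]

lemma schwartz_mellin_integrable (g : SchwartzMap ℝ ℂ) (t : ℝ) (s : ℂ) (hs : 0 < s.re) :
    IntegrableOn (fun x : ℝ => (x : ℂ) ^ (s - 1) * g (x + t)) (Ioi 0) := by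
  have h := mellinConvergent_of_isBigO_rpow (a := s.re + 1) (b := 0)
    (f := fun x : ℝ => g (x + t)) (s := s)
    ?_ (schwartz_shift_isBigO g t (s.re + 1) (by linarith)) (by linarith) ?_ hs
  · simpa [MellinConvergent, smul_eq_mul] using h
  · exact (g.continuous.comp (continuous_id.add continuous_const)).locallyIntegrable.locallyIntegrableOn _
  · have : Tendsto (fun x : ℝ => g (x + t)) (𝓝[>] 0) (𝓝 (g t)) := by
      have h3 : Continuous fun x : ℝ => g (x + t) :=
        g.continuous.comp (continuous_id.add continuous_const)
      simpa using (h3.tendsto 0).mono_left nhdsWithin_le_nhds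
    simpa [Real.rpow_zero] using this.isBigO_one ℝ

lemma schwartz_ibp (g : SchwartzMap ℝ ℂ) (t : ℝ) (s : ℂ) (hs : 0 < s.re) :
    ∫ x in Ioi (0:ℝ), (x:ℂ) ^ s * (SchwartzMap.derivCLM ℝ ℂ g) (x + t) =
      -s * ∫ x in Ioi (0:ℝ), (x:ℂ) ^ (s - 1) * g (x + t) := by
  have key : ∫ x in Ioi (0:ℝ),
      (s * (x:ℂ) ^ (s - 1)) * g (x + t) + (x:ℂ) ^ s * deriv g (x + t) = 0 - 0 := by
    apply integral_Ioi_deriv_mul_eq_sub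
      (u := fun x : ℝ => (x:ℂ) ^ s) (v := fun x : ℝ => g (x + t))
    · intro x hx
      have hx0 : (0:ℝ) < x := hx
      have : HasDerivAt (fun z : ℂ => z ^ s) (s * (x:ℂ) ^ (s - 1)) (x:ℝ) := by
        simpa using (hasDerivAt_id (x:ℂ)).cpow_const
          (Or.inl (by simpa using hx0))
      exact this.comp_ofReal
    · intro x hx
      exact (g.differentiable.differentiableAt (x := x + t)).hasDerivAt.comp_add_const x t
    · simp only [Pi.add_def, Pi.mul_def]
      apply Integrable.add
      · have := (schwartz_mellin_integrable g t s hs).const_mul s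
        simpa [mul_assoc] using this
      · have := schwartz_mellin_integrable (SchwartzMap.derivCLM ℝ ℂ g) t (s + 1) (by simp; linarith)
        simpa [SchwartzMap.derivCLM_apply, add_sub_cancel_right, IntegrableOn] using this
    · have h1 : Tendsto (fun x : ℝ => (x:ℂ) ^ s) (𝓝[>] 0) (𝓝 0) := by
        have hs0 : s ≠ 0 := fun h => by simp [h] at hs
        have := (continuousAt_ofReal_cpow_const 0 s (Or.inl hs)).tendsto
        simpa [Complex.ofReal_zero, Complex.zero_cpow hs0] using
          this.mono_left nhdsWithin_le_nhds
      have h2 : Tendsto (fun x : ℝ => (g (x + t) : ℂ)) (𝓝[>] 0) (𝓝 (g t)) := by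
        have h3 : Continuous fun x : ℝ => g (x + t) :=
          g.continuous.comp (continuous_id.add continuous_const)
        simpa using (h3.tendsto 0).mono_left nhdsWithin_le_nhds
      simpa [Pi.mul_def] using h1.mul h2
    · -- tendsto at top to 0
      have hO : (fun x : ℝ => (x:ℂ) ^ s * g (x + t)) =O[atTop] fun x : ℝ => x ^ (-(1:ℝ)) := by
        have hg : (fun x : ℝ => g (x + t)) =O[atTop] fun x : ℝ => x ^ (-(s.re + 1)) :=
          schwartz_shift_isBigO g t (s.re + 1) (by linarith)
        have hc : (fun x : ℝ => (x:ℂ) ^ s) =O[atTop] fun x : ℝ => x ^ s.re := by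
          apply IsBigO.of_bound 1
          filter_upwards [eventually_gt_atTop (0:ℝ)] with x hx
          rw [Complex.norm_cpow_eq_rpow_re_of_pos hx, one_mul,
            Real.norm_eq_abs, _root_.abs_of_nonneg (Real.rpow_nonneg hx.le _)]
        have := hc.mul hg
        refine this.trans (IsBigO.of_bound 1 ?_)
        filter_upwards [eventually_gt_atTop (0:ℝ)] with x hx
        have he : s.re + -(s.re + 1) = -1 := by ring
        rw [← Real.rpow_add hx, he, one_mul]
      exact hO.trans_tendsto (tendsto_rpow_neg_atTop one_pos)
  have hint1 : IntegrableOn (fun x : ℝ => (s * (x:ℂ) ^ (s - 1)) * g (x + t)) (Ioi (0:ℝ)) := by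
    have := (schwartz_mellin_integrable g t s hs).const_mul s
    simpa [mul_assoc, IntegrableOn] using this
  have hint2 : IntegrableOn (fun x : ℝ => (x:ℂ) ^ s * deriv g (x + t)) (Ioi (0:ℝ)) := by
    have := schwartz_mellin_integrable (SchwartzMap.derivCLM ℝ ℂ g) t (s + 1) (by simp; linarith)
    simpa [SchwartzMap.derivCLM_apply, add_sub_cancel_right] using this
  have hA : ∫ x in Ioi (0:ℝ), (s * (x:ℂ) ^ (s - 1)) * g (x + t)
      = s * ∫ x in Ioi (0:ℝ), (x:ℂ) ^ (s - 1) * g (x + t) := by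
    rw [← integral_const_mul]
    simp_rw [mul_assoc]
  have hB : (∫ x in Ioi (0:ℝ), (x:ℂ) ^ s * (SchwartzMap.derivCLM ℝ ℂ g) (x + t))
      = ∫ x in Ioi (0:ℝ), (x:ℂ) ^ s * deriv g (x + t) := by
    simp_rw [SchwartzMap.derivCLM_apply]
  rw [integral_add hint1 hint2, hA] at key
  rw [hB]
  linear_combination key

lemma deriv_iter_coe (f : SchwartzMap ℝ ℂ) (k : ℕ) :
    ⇑((SchwartzMap.derivCLM ℝ ℂ)^[k] f) = iteratedDeriv k ⇑f := by
  induction k generalizing f with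
  | zero => simp
  | succ n ih =>
    rw [Function.iterate_succ_apply, iteratedDeriv_succ', ih]
    congr 1

theorem gamma_pairing_parts (f : SchwartzMap ℝ ℂ) (k : ℕ) (hk : 1 ≤ k)
    (s : ℂ) (hs : 1 < s.re) (t : ℝ) :
    (1 / Complex.Gamma s) * ∫ x in Set.Ioi (0 : ℝ), (x : ℂ) ^ (s - 1) * f (x + t) =
      ((-1 : ℂ) ^ k / Complex.Gamma (s + k)) *
        ∫ x in Set.Ioi (0 : ℝ), (x : ℂ) ^ (s + k - 1) * iteratedDeriv k f (x + t) := by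
  clear hk
  induction k with
  | zero => simp
  | succ n ih =>
    rw [← deriv_iter_coe f (n + 1)]
    rw [← deriv_iter_coe f n] at ih
    have hre : 0 < (s + (n:ℂ)).re := by
      rw [Complex.add_re, Complex.natCast_re]
      have : (0:ℝ) ≤ n := Nat.cast_nonneg n
      linarith
    have hne : (s + (n:ℂ)) ≠ 0 := fun h => by rw [h] at hre; simp at hre
    have hG : Complex.Gamma (s + (n:ℂ)) ≠ 0 := Complex.Gamma_ne_zero_of_re_pos hre
    have key := schwartz_ibp ((SchwartzMap.derivCLM ℝ ℂ)^[n] f) t (s + (n:ℂ)) hre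
    have hcast : ((n + 1 : ℕ) : ℂ) = (n : ℂ) + 1 := by push_cast; ring
    rw [hcast, show s + ((n:ℂ) + 1) - 1 = s + (n:ℂ) by ring,
      show s + ((n:ℂ) + 1) = (s + (n:ℂ)) + 1 by ring,
      Complex.Gamma_add_one _ hne, Function.iterate_succ_apply', key, ih]
    have : ((-1 : ℂ)) ^ (n + 1) = -((-1:ℂ)^n) := by ring
    rw [this]
    field_simp
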